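/- Let A be an n-by-n skew-symmetric matrix over a field K, let v ∈ Kⁿ, and let A_v be the (n+1)-by-(n+1) skew-symmetric matrix with A in the top-left block, v as the last column, -vᵀ as the last row, and 0 in the corner. Then for every subset I of [n], det((A + v vᵀ)[I]) = det(A_v[α(I)]), where [·] denotes the principal submatrix on the given index set and α(I) = I if |I| is even and α(I) = I ∪ {n+1} if |I| is odd. -/

import Mathlib

open Matrix

/-- The principal submatrix of `M` on the index set `I` (with `det (psub M ∅) = 1`). -/
def psub {m : Type*} {K : Type*} (M : Matrix m m K) (I : Finset m) :
    Matrix I I K := fun i j => M i.1 j.1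

/-- The lift `α(I)`: `I` if `|I|` is even, `I ∪ {n+1}` if `|I|` is odd,
viewing `Fin n ⊆ Fin (n+1)` via `Fin.castSucc` and `n+1` as `Fin.last n`. -/
def alph {n : ℕ} (I : Finset (Fin n)) : Finset (Fin (n + 1)) :=
  if Even I.card then I.map Fin.castSuccEmb
  else insert (Fin.last n) (I.map Fin.castSuccEmb)

/-- The bordered matrix `A_v` with `A` in the top-left, `v` as the last column,
`-vᵀ` as the last row, and `0` in the corner. -/
def bordered {n : ℕ} {K : Type*} [Field K]
    (A : Matrix (Fin n) (Fin n) K) (v : Fin n → K) :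
    Matrix (Fin (n + 1)) (Fin (n + 1)) K := fun i j =>
  if hi : (i : ℕ) < n then
    if hj : (j : ℕ) < n then A ⟨i, hi⟩ ⟨j, hj⟩ else v ⟨i, hi⟩
  else
    if hj : (j : ℕ) < n then - v ⟨j, hj⟩ else 0

/-- A fixed-point-free involution forces even cardinality. -/
lemma even_card_of_fpf {ι : Type*} [Fintype ι] [DecidableEq ι] (σ : ι → ι)
    (h2 : ∀ i, σ (σ i) = i) (hnf : ∀ i, σ i ≠ i) : Even (Fintype.card ι) := by
  have h : ∑ _i : ι, (1 : ZMod 2) = 0 :=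
    Finset.sum_ninvolution σ (fun a => by decide) (fun a _ => hnf a)
      (fun a => Finset.mem_univ _) h2
  rw [Finset.sum_const, Finset.card_univ, nsmul_eq_mul, mul_one] at h
  rw [even_iff_two_dvd]
  exact (ZMod.natCast_eq_zero_iff _ 2).mp h

/-- An alternating matrix of odd size has zero determinant. -/
lemma det_alt_odd {ι : Type*} [Fintype ι] [DecidableEq ι] {R : Type*} [CommRing R]
    (M : Matrix ι ι R) (hT : Mᵀ = -M) (hd : ∀ i, M i i = 0)
    (hodd : ¬ Even (Fintype.card ι)) : M.det = 0 := by
  have hsk : ∀ i j, M i j = - M j i := by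
    intro i j
    have := congrFun (congrFun hT j) i
    simpa [Matrix.transpose_apply] using this
  rw [Matrix.det_apply]
  refine Finset.sum_ninvolution (fun σ => σ⁻¹) (fun σ => ?_) (fun σ hne => ?_)
    (fun σ => Finset.mem_univ _) (fun σ => inv_inv σ)
  · -- pairing terms
    have key : ∏ i, M (σ⁻¹ i) i = - ∏ i, M (σ i) i := by
      have h1 : ∏ i, M (σ⁻¹ i) i = ∏ i, M i (σ i) := by
        rw [← Equiv.prod_comp σ (fun i => M (σ⁻¹ i) i)]
        simp
      rw [h1]
      have h2 : ∀ i, M i (σ i) = (-1) * M (σ i) i := by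
        intro i; rw [hsk i (σ i)]; ring
      rw [Finset.prod_congr rfl (fun i _ => h2 i), Finset.prod_mul_distrib,
        Finset.prod_const, Finset.card_univ,
        (Nat.not_even_iff_odd.mp hodd).neg_one_pow]
      ring
    rw [Equiv.Perm.sign_inv, key, smul_neg]
    exact add_neg_cancel _
  · -- fixed-point freeness on nonzero terms
    intro hinv
    have hfix : ∃ i, σ i = i := by
      by_contra hno
      push_neg at hno
      refine hodd (even_card_of_fpf σ (fun i => ?_) hno)
      have hinv' : σ⁻¹ = σ := hinv
      calc σ (σ i) = σ⁻¹ (σ i) := by rw [hinv']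
        _ = i := Equiv.symm_apply_apply σ i
    obtain ⟨i, hi⟩ := hfix
    have : ∏ j, M (σ j) j = 0 :=
      Finset.prod_eq_zero (Finset.mem_univ i) (by rw [hi]; exact hd i)
    exact hne (by rw [this, smul_zero])

lemma det_psub_congr {m : Type*} [DecidableEq m] {K : Type*} [CommRing K] (M : Matrix m m K)
    {I J : Finset m} (h : I = J) : (psub M I).det = (psub M J).det := by
  subst h; rfl

/-- `det (B + w wᵀ) = det B + det [[B, w], [-wᵀ, 0]]` over any commutative ring. -/
lemma det_add_vecMulVec_eq {ι : Type*} [Fintype ι] [DecidableEq ι] {R : Type*} [CommRing R]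
    (B : Matrix ι ι R) (w : ι → R) :
    (B + vecMulVec w w).det
      = B.det + (fromBlocks B (replicateCol Unit w) (-(replicateRow Unit w)) 0).det := by
  set P : Matrix (ι ⊕ Unit) (ι ⊕ Unit) R := fromBlocks B (replicateCol Unit w) (-(replicateRow Unit w)) 1 with hP
  have step1 : P.det = (B + vecMulVec w w).det := by
    have hmul : P * fromBlocks 1 0 (replicateRow Unit w) 1
        = fromBlocks (B + vecMulVec w w) (replicateCol Unit w) 0 1 := by
      rw [hP, fromBlocks_multiply]
      rw [Matrix.vecMulVec_eq Unit w w]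
      simp only [Matrix.mul_one, Matrix.mul_zero, Matrix.one_mul, Matrix.neg_mul,
        zero_add, add_zero, neg_zero, neg_add_cancel]
    have h1 : (fromBlocks (1 : Matrix ι ι R) 0 (replicateRow Unit w) (1 : Matrix Unit Unit R)).det = 1 := by
      rw [det_fromBlocks_zero₁₂, det_one, det_one, one_mul]
    have h2 := congrArg Matrix.det hmul
    rw [det_mul, h1, mul_one, det_fromBlocks_zero₂₁, det_one, mul_one] at h2
    exact h2
  have step2 : P.det
      = (fromBlocks B (replicateCol Unit w) (-(replicateRow Unit w)) 0).det + B.det := by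
    have hu : P = (P.updateRow (Sum.inr ())
        ((Sum.elim (fun j => -(w j)) (fun _ : Unit => (0 : R))) + (Sum.elim (fun _ : ι => (0 : R)) (fun _ : Unit => (1 : R))))) := by
      ext i j
      rcases i with i | i
      · simp [Matrix.updateRow_apply]
      · rcases j with j | j <;> simp [hP, Matrix.updateRow_apply, fromBlocks]
    have ha : P.updateRow (Sum.inr ()) (Sum.elim (fun j => -(w j)) (fun _ : Unit => (0 : R)))
        = fromBlocks B (replicateCol Unit w) (-(replicateRow Unit w)) 0 := by
      ext i j
      rcases i with i | i
      · simp [hP, Matrix.updateRow_apply, fromBlocks]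
      · rcases j with j | j <;> simp [hP, Matrix.updateRow_apply, fromBlocks]
    have hb : P.updateRow (Sum.inr ()) (Sum.elim (fun _ : ι => (0 : R)) (fun _ : Unit => (1 : R)))
        = fromBlocks B (replicateCol Unit w) 0 1 := by
      ext i j
      rcases i with i | i
      · simp [hP, Matrix.updateRow_apply, fromBlocks]
      · rcases j with j | j <;> simp [hP, Matrix.updateRow_apply, fromBlocks]
    calc P.det = (P.updateRow (Sum.inr ())
        ((Sum.elim (fun j => -(w j)) (fun _ : Unit => (0 : R))) + (Sum.elim (fun _ : ι => (0 : R)) (fun _ : Unit => (1 : R))))).det := by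
          rw [← hu]
      _ = (P.updateRow (Sum.inr ()) (Sum.elim (fun j => -(w j)) (fun _ : Unit => (0 : R)))).det
          + (P.updateRow (Sum.inr ()) (Sum.elim (fun _ : ι => (0 : R)) (fun _ : Unit => (1 : R)))).det :=
            Matrix.det_updateRow_add _ _ _ _
      _ = (fromBlocks B (replicateCol Unit w) (-(replicateRow Unit w)) 0).det + B.det := by
          rw [ha, hb, det_fromBlocks_zero₂₁, det_one, mul_one]
  rw [← step1, step2, add_comm]

/-- `det((A + v vᵀ)[I]) = det(A_v[α(I)])` for every `I ⊆ [n]`. -/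
theorem stmt2 {n : ℕ} {K : Type*} [Field K]
    (A : Matrix (Fin n) (Fin n) K) (v : Fin n → K)
    (hskew : Aᵀ = -A) (hdiag : ∀ i, A i i = 0)
    (I : Finset (Fin n)) :
    (psub (A + Matrix.vecMulVec v v) I).det = (psub (bordered A v) (alph I)).det := by
  classical
  set B : Matrix I I K := psub A I with hBdef
  set w : I → K := fun i => v i.1 with hwdef
  have hB : psub (A + Matrix.vecMulVec v v) I = B + vecMulVec w w := by
    ext i j; simp [psub, vecMulVec, hBdef, hwdef]
  have hsk : ∀ (i j : I), B i j = - B j i := by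
    intro i j
    have := congrFun (congrFun hskew j.1) i.1
    simpa [psub, hBdef, Matrix.transpose_apply] using this
  have hBd : ∀ i : I, B i i = 0 := fun i => hdiag i.1
  have hlast : ∀ y : Fin (n + 1), y ∈ I.map Fin.castSuccEmb → (y : ℕ) < n := by
    intro y hy
    obtain ⟨a, _, ha⟩ := Finset.mem_map.mp hy
    simp only [Fin.castSuccEmb] at ha
    exact ha ▸ a.isLt
  rw [hB, det_add_vecMulVec_eq]
  by_cases hc : Even I.card
  · -- even case
    have halph : alph I = I.map Fin.castSuccEmb := by rw [alph, if_pos hc]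
    have h0 : (fromBlocks B (replicateCol Unit w) (-(replicateRow Unit w)) 0).det = 0 := by
      refine det_alt_odd _ ?_ ?_ ?_
      · ext i j
        rcases i with i | i <;> rcases j with j | j
        · simpa [fromBlocks] using hsk j i
        · simp [fromBlocks]
        · simp [fromBlocks]
        · simp [fromBlocks]
      · rintro (i | i)
        · exact hBd i
        · simp [fromBlocks]
      · rw [Fintype.card_sum, Fintype.card_coe, Fintype.card_unit]
        simpa [Nat.even_add_one] using hc
    rw [h0, add_zero, det_psub_congr (bordered A v) halph]
    -- build equivalence I ≃ (I.map castSuccEmb)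
    let e : {x // x ∈ I} ≃ {y // y ∈ I.map Fin.castSuccEmb} :=
      { toFun := fun x => ⟨Fin.castSucc x.1, Finset.mem_map_of_mem _ x.2⟩
        invFun := fun y => ⟨⟨(y.1 : ℕ), hlast y.1 y.2⟩, by
            obtain ⟨a, haI, ha⟩ := Finset.mem_map.mp y.2
            have h2 : (a : ℕ) = ((y.1 : Fin (n+1)) : ℕ) := congrArg Fin.val ha
            have hval : a = ⟨(y.1 : ℕ), hlast y.1 y.2⟩ := Fin.ext h2
            exact hval ▸ haI⟩
        left_inv := fun x => Subtype.ext (Fin.ext rfl)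
        right_inv := fun y => Subtype.ext (Fin.ext rfl) }
    have hsub : B = (psub (bordered A v) (I.map Fin.castSuccEmb)).submatrix e e := by
      ext i j
      simp only [Matrix.submatrix_apply, psub, hBdef, bordered, e, Equiv.coe_fn_mk]
      rw [dif_pos (by exact i.1.isLt), dif_pos (by exact j.1.isLt)]
      congr 1 <;> exact Fin.ext rfl
    rw [hsub, det_submatrix_equiv_self]
  · -- odd case
    have halph : alph I = insert (Fin.last n) (I.map Fin.castSuccEmb) := by
      rw [alph, if_neg hc]
    have h0 : B.det = 0 := by
      refine det_alt_odd _ ?_ hBd ?_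
      · ext i j; simp [Matrix.transpose_apply, hsk j i]
      · rwa [Fintype.card_coe]
    rw [h0, zero_add, det_psub_congr (bordered A v) halph]
    let e : ({x // x ∈ I} ⊕ Unit) ≃ {y // y ∈ insert (Fin.last n) (I.map Fin.castSuccEmb)} :=
      { toFun := Sum.elim
          (fun x => ⟨Fin.castSucc x.1,
            Finset.mem_insert_of_mem (Finset.mem_map.mpr ⟨x.1, x.2, rfl⟩)⟩)
          (fun _ => ⟨Fin.last n, Finset.mem_insert_self _ _⟩)
        invFun := fun y =>
          if h : (y.1 : ℕ) < n then
            Sum.inl ⟨⟨(y.1 : ℕ), h⟩, by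
              rcases Finset.mem_insert.mp y.2 with h1 | h1
              · exact absurd (h1 ▸ h) (by simp)
              · obtain ⟨a, haI, ha⟩ := Finset.mem_map.mp h1
                have h2 : (a : ℕ) = ((y.1 : Fin (n+1)) : ℕ) := congrArg Fin.val ha
                have hval : a = ⟨(y.1 : ℕ), h⟩ := Fin.ext h2
                exact hval ▸ haI⟩
          else Sum.inr ()
        left_inv := by
          rintro (x | x)
          · simp only [Sum.elim_inl]
            erw [dif_pos (by exact x.1.isLt)]
            exact congrArg Sum.inl (Subtype.ext (Fin.ext rfl))
          · simp only [Sum.elim_inr]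
            erw [dif_neg (by simp)]
        right_inv := by
          rintro ⟨y, hy⟩
          by_cases h : (y : ℕ) < n
          · simp only [dif_pos h, Sum.elim_inl]
            exact Subtype.ext (Fin.ext rfl)
          · simp only [dif_neg h, Sum.elim_inr]
            have h2 : (y : ℕ) < n + 1 := y.isLt
            have hy2 : y = Fin.last n := Fin.ext (by simp only [Fin.val_last]; omega)
            exact Subtype.ext hy2.symm }
    have hsub : fromBlocks B (replicateCol Unit w) (-(replicateRow Unit w)) 0
        = (psub (bordered A v) (insert (Fin.last n) (I.map Fin.castSuccEmb))).submatrix e e := by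
      ext i j
      rcases i with i | i <;> rcases j with j | j <;>
        simp only [Matrix.submatrix_apply, psub, hBdef, hwdef, bordered, e, Equiv.coe_fn_mk,
          Sum.elim_inl, Sum.elim_inr, fromBlocks, Matrix.of_apply, Matrix.neg_apply]
      · erw [dif_pos (by exact i.1.isLt), dif_pos (by exact j.1.isLt)]
        congr 1 <;> exact Fin.ext rfl
      · erw [dif_pos (by exact i.1.isLt), dif_neg (by simp)]
        exact congrArg v (Fin.ext rfl)
      · erw [dif_neg (by simp), dif_pos (by exact j.1.isLt)]
        exact congrArg Neg.neg (congrArg v (Fin.ext rfl))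
      · erw [dif_neg (by simp), dif_neg (by simp)]
        exact Matrix.zero_apply i j
    rw [hsub, det_submatrix_equiv_self]
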